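/- Let u, v, w be positive real numbers. Then there exists a unique triple (a, b, c) of positive reals satisfying the strict triangle inequality such that 2S/(b+c-a) = u, 2S/(a+c-b) = v and 2S/(a+b-c) = w, where S is the Heron area of the triangle with sides a, b, c. Explicitly, a = (uv+uw)/√(uv+vw+wu), b = (uv+vw)/√(uv+vw+wu) and c = (uw+vw)/√(uv+vw+wu). -/

import Mathlib

theorem excircle_radii_unique_triangle (u v w : ℝ) (hu : 0 < u) (hv : 0 < v) (hw : 0 < w) :
    let s := Real.sqrt (u * v + v * w + w * u)
    let P : ℝ → ℝ → ℝ → Prop := fun a b c =>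
      0 < a ∧ 0 < b ∧ 0 < c ∧ a < b + c ∧ b < a + c ∧ c < a + b ∧
      2 * (Real.sqrt ((a + b + c) * (b + c - a) * (a + c - b) * (a + b - c)) / 4) / (b + c - a) = u ∧
      2 * (Real.sqrt ((a + b + c) * (b + c - a) * (a + c - b) * (a + b - c)) / 4) / (a + c - b) = v ∧
      2 * (Real.sqrt ((a + b + c) * (b + c - a) * (a + c - b) * (a + b - c)) / 4) / (a + b - c) = w
    P ((u * v + u * w) / s) ((u * v + v * w) / s) ((u * w + v * w) / s) ∧
    ∀ a b c : ℝ, P a b c →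
      a = (u * v + u * w) / s ∧ b = (u * v + v * w) / s ∧ c = (u * w + v * w) / s := by
  intro s P
  have hsum : 0 < u * v + v * w + w * u := by positivity
  have hs0 : 0 < s := Real.sqrt_pos.mpr hsum
  have hs2 : s ^ 2 = u * v + v * w + w * u := Real.sq_sqrt hsum.le
  have hsne : s ≠ 0 := hs0.ne'
  constructor
  · show 0 < _ ∧ _
    set A := (u * v + u * w) / s with hA
    set B := (u * v + v * w) / s with hB
    set C := (u * w + v * w) / s with hC
    have hX : B + C - A = 2 * v * w / s := by rw [hA, hB, hC]; field_simp; ring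
    have hY : A + C - B = 2 * u * w / s := by rw [hA, hB, hC]; field_simp; ring
    have hZ : A + B - C = 2 * u * v / s := by rw [hA, hB, hC]; field_simp; ring
    have hS : A + B + C = 2 * s := by
      rw [hA, hB, hC]
      field_simp
      linear_combination -2 * hs2
    have harg : (A + B + C) * (B + C - A) * (A + C - B) * (A + B - C)
        = (4 * u * v * w / s) ^ 2 := by
      rw [hS, hX, hY, hZ]
      field_simp
      ring
    have hsqrt : Real.sqrt ((A + B + C) * (B + C - A) * (A + C - B) * (A + B - C))
        = 4 * u * v * w / s := by
      rw [harg, Real.sqrt_sq (by positivity)]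
    have hXpos : 0 < 2 * v * w / s := by positivity
    have hYpos : 0 < 2 * u * w / s := by positivity
    have hZpos : 0 < 2 * u * v / s := by positivity
    refine ⟨by rw [hA]; positivity, by rw [hB]; positivity, by rw [hC]; positivity,
      by linarith, by linarith, by linarith, ?_, ?_, ?_⟩
    · rw [hsqrt, hX]; field_simp
    · rw [hsqrt, hY]; field_simp
    · rw [hsqrt, hZ]; field_simp
  · rintro a b c ⟨ha, hb, hc, hab, hbc, hca, h1, h2, h3⟩
    have hx : 0 < b + c - a := by linarith
    have hy : 0 < a + c - b := by linarith
    have hz : 0 < a + b - c := by linarith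
    have hprod : 0 < (a + b + c) * (b + c - a) * (a + c - b) * (a + b - c) := by positivity
    set T := Real.sqrt ((a + b + c) * (b + c - a) * (a + c - b) * (a + b - c)) with hT
    have hT0 : 0 < T := Real.sqrt_pos.mpr hprod
    have hT2 : T ^ 2 = (a + b + c) * (b + c - a) * (a + c - b) * (a + b - c) :=
      Real.sq_sqrt hprod.le
    have e1 : T = 2 * u * (b + c - a) := by
      field_simp [hx.ne'] at h1
      linarith
    have e2 : T = 2 * v * (a + c - b) := by
      field_simp [hy.ne'] at h2
      linarith
    have e3 : T = 2 * w * (a + b - c) := by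
      field_simp [hz.ne'] at h3
      linarith
    have key0 : T ^ 4 * (u * v + v * w + w * u) = 16 * (u * v * w) ^ 2 * T ^ 2 := by
      linear_combination
        (u * v * T ^ 3
          + 4 * v ^ 2 * w ^ 2 * (a + c - b) * (a + b - c) * (T + 2 * u * (b + c - a))
          + w * u * T ^ 3) * e1
        + (2 * u ^ 2 * v * (b + c - a) * T ^ 2
          + v * w * T ^ 3
          + 4 * u ^ 2 * w ^ 2 * (b + c - a) * (a + b - c) * (T + 2 * v * (a + c - b))) * e2
        + (4 * u ^ 2 * v ^ 2 * (b + c - a) * (a + c - b) * (T + 2 * w * (a + b - c))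
          + 2 * v ^ 2 * w * (a + c - b) * T ^ 2
          + 2 * u ^ 2 * w * (b + c - a) * T ^ 2) * e3
        - 16 * (u * v * w) ^ 2 * hT2
    have key : T ^ 2 * (u * v + v * w + w * u) = 16 * (u * v * w) ^ 2 :=
      mul_left_cancel₀ (pow_ne_zero 2 hT0.ne') (by linear_combination key0)
    have hTs : T = 4 * u * v * w / s := by
      have hsq : T ^ 2 = (4 * u * v * w / s) ^ 2 := by
        rw [div_pow, eq_div_iff (by positivity : s ^ 2 ≠ 0)]
        linear_combination T ^ 2 * hs2 + key
      have h0 : (T - 4 * u * v * w / s) * (T + 4 * u * v * w / s) = 0 := by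
        linear_combination hsq
      rcases mul_eq_zero.mp h0 with h | h
      · linarith
      · exfalso
        have : 0 < T + 4 * u * v * w / s := by positivity
        linarith
    have hX' : (b + c - a) * s = 2 * (v * w) := by
      have h := e1.symm.trans hTs
      rw [eq_div_iff hsne] at h
      exact mul_left_cancel₀ (by positivity : (2 * u : ℝ) ≠ 0) (by linear_combination h)
    have hY' : (a + c - b) * s = 2 * (u * w) := by
      have h := e2.symm.trans hTs
      rw [eq_div_iff hsne] at h
      exact mul_left_cancel₀ (by positivity : (2 * v : ℝ) ≠ 0) (by linear_combination h)
    have hZ' : (a + b - c) * s = 2 * (u * v) := by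
      have h := e3.symm.trans hTs
      rw [eq_div_iff hsne] at h
      exact mul_left_cancel₀ (by positivity : (2 * w : ℝ) ≠ 0) (by linear_combination h)
    refine ⟨?_, ?_, ?_⟩ <;> rw [eq_div_iff hsne] <;> linarith [hX', hY', hZ']
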